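/- Let X be a finite nonempty set, f : X → ℝ, and let p : X → [0,1] assign to each x its true risk. Fix γ < γ̂ and suppose the true feasible set S := {x ∈ X : p(x) ≤ γ} is nonempty; let ν* := min_{x ∈ S} f(x). Let ξ_n(x), n = 1, …, N, be random indicators such that for each fixed x they are i.i.d. Bernoulli with mean p(x), and define the (random) SAA optimal value ν̂_N := min{ f(x) : x ∈ X, (1/N)·Σ_n ξ_n(x) ≤ γ̂ } (with ν̂_N := +∞ if no x is SAA-feasible). Then P( ν̂_N ≤ ν* ) ≥ 1 − exp(−2·N·(γ̂ − γ)²); in particular, for δ ∈ (0,1) and N ≥ log(1/δ)/(2(γ̂ − γ)²), the SAA optimal value ν̂_N is a lower bound for the true optimal value ν* with probability at least 1 − δ. -/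

import Mathlib

open MeasureTheory ProbabilityTheory

section Hoeffding
open Real

lemma bernoulli_mgf_bound (q t : ℝ) (hq0 : 0 ≤ q) (hq1 : q ≤ 1) (ht : 0 ≤ t) :
    1 - q + q * exp t ≤ exp (q * t + t ^ 2 / 8) := by
  set g : ℝ → ℝ := fun s => 1 - q + q * exp s with hg_def
  have hgpos : ∀ s, 0 < g s := by
    intro s
    rcases eq_or_lt_of_le hq0 with h | h
    · simp only [hg_def, ← h]; norm_num
    · have h1 : 0 < q * exp s := mul_pos h (exp_pos s)
      simp only [hg_def]; nlinarith
  have hgd : ∀ s, HasDerivAt g (q * exp s) s := by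
    intro s
    exact ((Real.hasDerivAt_exp s).const_mul q).const_add (1 - q)
  -- h1 is the derivative of h := q*s + s^2/8 - log (g s)
  set h1 : ℝ → ℝ := fun s => q + s / 4 - q * exp s / g s with h1_def
  have h1d : ∀ s, HasDerivAt h1
      (1 / 4 - (q * exp s * g s - q * exp s * (q * exp s)) / (g s) ^ 2) s := by
    intro s
    have hd : HasDerivAt (fun s => q * exp s / g s)
        ((q * exp s * g s - q * exp s * (q * exp s)) / (g s) ^ 2) s :=
      ((Real.hasDerivAt_exp s).const_mul q).div (hgd s) (hgpos s).ne'
    have : HasDerivAt (fun s => q + s / 4) (1 / 4) s := by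
      simpa using ((hasDerivAt_id s).div_const 4).const_add q
    exact this.sub hd
  have h1deriv_nonneg : ∀ s, 0 ≤ 1 / 4 - (q * exp s * g s - q * exp s * (q * exp s)) / (g s) ^ 2 := by
    intro s
    rw [sub_nonneg, div_le_iff₀ (pow_pos (hgpos s) 2)]
    have hgs : g s = 1 - q + q * exp s := rfl
    nlinarith [sq_nonneg ((1 - q) - q * exp s), (hgpos s).le, mul_nonneg hq0 (exp_pos s).le,
      sq_nonneg (g s)]
  have h1mono : Monotone h1 := by
    refine monotone_of_deriv_nonneg (fun s => (h1d s).differentiableAt) (fun s => ?_)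
    rw [(h1d s).deriv]; exact h1deriv_nonneg s
  have h1zero : h1 0 = 0 := by
    have : g 0 = 1 := by simp [hg_def]
    simp [h1_def, this]
  -- now h := q*s + s^2/8 - log (g s)
  set h : ℝ → ℝ := fun s => q * s + s ^ 2 / 8 - Real.log (g s) with h_def
  have hd : ∀ s, HasDerivAt h (h1 s) s := by
    intro s
    have hl : HasDerivAt (fun s => Real.log (g s)) (q * exp s / g s) s :=
      (hgd s).log (hgpos s).ne'
    have hpoly : HasDerivAt (fun s => q * s + s ^ 2 / 8) (q + s * 2 / 8) s := by
      have h2 : HasDerivAt (fun s : ℝ => s ^ 2) (2 * s ^ (2 - 1)) s := hasDerivAt_pow 2 s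
      exact (((hasDerivAt_id s).const_mul q).add (h2.div_const 8)).congr_deriv (by norm_num; ring)
    have := hpoly.sub hl
    exact this.congr_deriv (by show _ = q + s / 4 - q * exp s / g s; ring)
  have hmono : MonotoneOn h (Set.Ici 0) := by
    refine monotoneOn_of_deriv_nonneg (convex_Ici 0)
      (Continuous.continuousOn (by
        have : Differentiable ℝ h := fun s => (hd s).differentiableAt
        exact this.continuous)) (fun s _ => (hd s).differentiableAt.differentiableWithinAt)
      (fun s hs => ?_)
    rw [(hd s).deriv]
    have : (0:ℝ) ≤ s := le_of_lt (by simpa using hs)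
    calc (0:ℝ) = h1 0 := h1zero.symm
      _ ≤ h1 s := h1mono this
  have hzero : h 0 = 0 := by
    have : g 0 = 1 := by simp [hg_def]
    simp [h_def, this]
  have hge : 0 ≤ h t := by
    calc (0:ℝ) = h 0 := hzero.symm
      _ ≤ h t := hmono (Set.self_mem_Ici) (by simpa using ht) ht
  have hlog : Real.log (g t) ≤ q * t + t ^ 2 / 8 := by
    simp only [h_def] at hge; linarith
  calc 1 - q + q * exp t = g t := rfl
    _ = exp (Real.log (g t)) := (Real.exp_log (hgpos t)).symm
    _ ≤ exp (q * t + t ^ 2 / 8) := exp_le_exp.mpr hlog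

end Hoeffding

/-- The SAA optimal value `ν̂_N` (with value `+∞` when no point is SAA-feasible)
is a lower bound for the true optimal value `ν*` of the chance-constrained problem
with probability at least `1 − exp(−2N(γ̂−γ)²)`; in particular, with probability at
least `1 − δ` when `N ≥ log(1/δ)/(2(γ̂−γ)²)`. -/
theorem saa_optimal_value_lower_bound
    {Ω : Type*} [MeasurableSpace Ω] (μ : Measure Ω) [IsProbabilityMeasure μ]
    {X : Type*} [Fintype X] [Nonempty X]
    (f : X → ℝ) (p : X → ℝ) (hp : ∀ x, p x ∈ Set.Icc (0 : ℝ) 1)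
    (γ γhat : ℝ) (hγ : γ < γhat)
    (hS : {x | p x ≤ γ}.Nonempty)
    (νstar : ℝ) (hν : IsLeast (f '' {x | p x ≤ γ}) νstar)
    (N : ℕ) (hN : 0 < N)
    (ξ : X → Fin N → Ω → ℝ)
    (hmeas : ∀ x n, Measurable (ξ x n))
    (h01 : ∀ x n ω, ξ x n ω = 0 ∨ ξ x n ω = 1)
    (hindep : ∀ x, iIndepFun (ξ x) μ)
    (hmean : ∀ x n, ∫ ω, ξ x n ω ∂μ = p x) :
    1 - ENNReal.ofReal (Real.exp (-2 * N * (γhat - γ) ^ 2)) ≤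
        μ {ω | sInf ((fun x => (f x : EReal)) ''
            {x | (1 / (N : ℝ)) * ∑ n, ξ x n ω ≤ γhat}) ≤ (νstar : EReal)} ∧
      ∀ δ : ℝ, 0 < δ → δ < 1 → (N : ℝ) ≥ Real.log (1 / δ) / (2 * (γhat - γ) ^ 2) →
        1 - ENNReal.ofReal δ ≤
          μ {ω | sInf ((fun x => (f x : EReal)) ''
              {x | (1 / (N : ℝ)) * ∑ n, ξ x n ω ≤ γhat}) ≤ (νstar : EReal)} := by
  obtain ⟨xs, hxs, hfxs⟩ := hν.1
  set T := {ω | sInf ((fun x => (f x : EReal)) ''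
      {x | (1 / (N : ℝ)) * ∑ n, ξ x n ω ≤ γhat}) ≤ (νstar : EReal)} with hT_def
  set q := p xs with hq_def
  have hq0 : 0 ≤ q := (hp xs).1
  have hq1 : q ≤ 1 := (hp xs).2
  have hqγ : q ≤ γ := hxs
  set t : ℝ := 4 * (γhat - q) with ht_def
  have ht : 0 < t := by simp only [ht_def]; nlinarith
  have hNpos : (0:ℝ) < N := Nat.cast_pos.mpr hN
  -- pointwise identity for exp of indicator
  have hptw : ∀ n, (fun ω => Real.exp (t * ξ xs n ω))
      = fun ω => 1 + (Real.exp t - 1) * ξ xs n ω := by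
    intro n; funext ω
    rcases h01 xs n ω with h | h <;> simp [h]
  have hintξ : ∀ n, Integrable (ξ xs n) μ := by
    intro n
    refine Integrable.mono' (integrable_const 1) (hmeas xs n).aestronglyMeasurable
      (Filter.Eventually.of_forall fun ω => ?_)
    rcases h01 xs n ω with h | h <;> simp [h]
  have hint : ∀ n, Integrable (fun ω => Real.exp (t * ξ xs n ω)) μ := by
    intro n; rw [hptw n]
    exact (integrable_const 1).add ((hintξ n).const_mul _)
  -- mgf of each coordinate
  have hmgf : ∀ n, mgf (ξ xs n) μ t = 1 - q + q * Real.exp t := by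
    intro n
    rw [mgf, hptw n, integral_add (integrable_const 1) ((hintξ n).const_mul _),
      integral_const, integral_const_mul, hmean xs n]
    simp [hq_def]; ring
  -- mgf of the sum
  have hmgfsum : mgf (∑ n, ξ xs n) μ t = (1 - q + q * Real.exp t) ^ N := by
    rw [(hindep xs).mgf_sum (hmeas xs) Finset.univ]
    simp [hmgf, Finset.prod_const]
  -- Chernoff bound
  have hintsum : Integrable (fun ω => Real.exp (t * (∑ n, ξ xs n) ω)) μ :=
    (hindep xs).integrable_exp_mul_sum (hmeas xs) (fun n _ => hint n)
  have hchernoff := measure_ge_le_exp_mul_mgf (X := ∑ n, ξ xs n) (μ := μ)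
    ((N : ℝ) * γhat) ht.le hintsum
  rw [hmgfsum] at hchernoff
  -- real-valued tail bound
  have hgpos : (0:ℝ) < 1 - q + q * Real.exp t := by
    rcases eq_or_lt_of_le hq0 with h | h
    · rw [← h]; norm_num
    · nlinarith [Real.exp_pos t]
  have hbern := bernoulli_mgf_bound q t hq0 hq1 ht.le
  have hpow : (1 - q + q * Real.exp t) ^ N ≤ Real.exp (q * t + t ^ 2 / 8) ^ N :=
    pow_le_pow_left₀ hgpos.le hbern N
  have hreal : (μ {ω | (N : ℝ) * γhat ≤ (∑ n, ξ xs n) ω}).toReal ≤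
      Real.exp (-2 * N * (γhat - γ) ^ 2) := by
    calc (μ {ω | (N : ℝ) * γhat ≤ (∑ n, ξ xs n) ω}).toReal
        ≤ Real.exp (-t * ((N : ℝ) * γhat)) * (1 - q + q * Real.exp t) ^ N := hchernoff
      _ ≤ Real.exp (-t * ((N : ℝ) * γhat)) * Real.exp (q * t + t ^ 2 / 8) ^ N := by
          gcongr
      _ = Real.exp (-t * ((N : ℝ) * γhat) + N * (q * t + t ^ 2 / 8)) := by
          rw [← Real.exp_nat_mul, ← Real.exp_add]
      _ = Real.exp (-2 * N * (γhat - q) ^ 2) := by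
          congr 1; simp only [ht_def]; ring
      _ ≤ Real.exp (-2 * N * (γhat - γ) ^ 2) := by
          apply Real.exp_le_exp.mpr
          have hsq : (γhat - γ) ^ 2 ≤ (γhat - q) ^ 2 := by nlinarith
          nlinarith [mul_le_mul_of_nonneg_left hsq (by positivity : (0:ℝ) ≤ 2 * (N:ℝ))]
  -- the good event
  set E := {ω | (1 / (N : ℝ)) * ∑ n, ξ xs n ω ≤ γhat} with hE_def
  have hSmeas : Measurable (fun ω => ∑ n, ξ xs n ω) :=
    Finset.measurable_sum _ (fun n _ => hmeas xs n)
  have hEmeas : MeasurableSet E :=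
    measurableSet_le (hSmeas.const_mul _) measurable_const
  have hET : E ⊆ T := by
    intro ω hω
    have hmem : (f xs : EReal) ∈ ((fun x => (f x : EReal)) ''
        {x | (1 / (N : ℝ)) * ∑ n, ξ x n ω ≤ γhat}) := ⟨xs, hω, rfl⟩
    have := sInf_le hmem
    simpa [hT_def, hfxs] using this
  have hEc : Eᶜ ⊆ {ω | (N : ℝ) * γhat ≤ (∑ n, ξ xs n) ω} := by
    intro ω hω
    have h : γhat < (1 / (N : ℝ)) * ∑ n, ξ xs n ω := lt_of_not_ge hω
    have : (N : ℝ) * γhat < ∑ n, ξ xs n ω := by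
      have := mul_lt_mul_of_pos_left h hNpos
      rw [← mul_assoc, mul_one_div_cancel hNpos.ne', one_mul] at this
      exact this
    simp only [Finset.sum_apply, Set.mem_setOf_eq]
    exact this.le
  have hEcbound : μ Eᶜ ≤ ENNReal.ofReal (Real.exp (-2 * N * (γhat - γ) ^ 2)) := by
    calc μ Eᶜ ≤ μ {ω | (N : ℝ) * γhat ≤ (∑ n, ξ xs n) ω} := measure_mono hEc
      _ = ENNReal.ofReal ((μ {ω | (N : ℝ) * γhat ≤ (∑ n, ξ xs n) ω}).toReal) :=
          (ENNReal.ofReal_toReal (measure_ne_top μ _)).symm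
      _ ≤ ENNReal.ofReal (Real.exp (-2 * N * (γhat - γ) ^ 2)) :=
          ENNReal.ofReal_le_ofReal hreal
  have hmain : 1 - ENNReal.ofReal (Real.exp (-2 * N * (γhat - γ) ^ 2)) ≤ μ T := by
    have hE1 : μ E = 1 - μ Eᶜ := by
      have := prob_compl_eq_one_sub (μ := μ) hEmeas.compl
      rwa [compl_compl] at this
    calc 1 - ENNReal.ofReal (Real.exp (-2 * N * (γhat - γ) ^ 2))
        ≤ 1 - μ Eᶜ := tsub_le_tsub_left hEcbound 1
      _ = μ E := hE1.symm
      _ ≤ μ T := measure_mono hET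
  refine ⟨hmain, fun δ hδ0 hδ1 hNδ => ?_⟩
  have h2 : (0:ℝ) < 2 * (γhat - γ) ^ 2 := by
    have := sub_pos.mpr hγ; positivity
  have hlog : Real.log (1 / δ) ≤ (N : ℝ) * (2 * (γhat - γ) ^ 2) :=
    (div_le_iff₀ h2).mp hNδ
  have hexpδ : Real.exp (-2 * N * (γhat - γ) ^ 2) ≤ δ := by
    rw [one_div, Real.log_inv] at hlog
    calc Real.exp (-2 * N * (γhat - γ) ^ 2) ≤ Real.exp (Real.log δ) := by
          apply Real.exp_le_exp.mpr; nlinarith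
      _ = δ := Real.exp_log hδ0
  calc 1 - ENNReal.ofReal δ
      ≤ 1 - ENNReal.ofReal (Real.exp (-2 * N * (γhat - γ) ^ 2)) :=
        tsub_le_tsub_left (ENNReal.ofReal_le_ofReal hexpδ) 1
    _ ≤ μ T := hmain
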